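/- Fix compact metric spaces M, N and Borel probability measures μ, ν. For c ∈ C^0(M×N;R) let M(c) ⊂ Π(μ,ν) denote the set of optimal transport plans (minimizers of π ↦ ∫ c dπ over Π(μ,ν)). Then there exists a residual subset C of C^0(M×N;R) (in the uniform topology) such that M(c) is a singleton for every c ∈ C. -/

import Mathlib

open MeasureTheory TopologicalSpace

section OTAux

variable {Ω : Type*} [MetricSpace Ω] [CompactSpace Ω] [MeasurableSpace Ω] [BorelSpace Ω]

/-- Integral of a continuous function against a probability measure. -/
noncomputable def ovInt (c : ContinuousMap Ω ℝ) (π : ProbabilityMeasure Ω) : ℝ :=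
  ∫ p, c p ∂π.toMeasure

lemma ovInt_integrable (c : ContinuousMap Ω ℝ) (π : ProbabilityMeasure Ω) :
    Integrable c π.toMeasure :=
  c.continuous.integrable_of_hasCompactSupport (HasCompactSupport.of_compactSpace c)

lemma abs_ovInt_le (c : ContinuousMap Ω ℝ) (π : ProbabilityMeasure Ω) : |ovInt c π| ≤ ‖c‖ := by
  have h : ‖∫ p, c p ∂π.toMeasure‖ ≤ ‖c‖ * (π.toMeasure Set.univ).toReal :=
    norm_integral_le_of_norm_le_const (Filter.Eventually.of_forall fun x => c.norm_coe_le_norm x)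
  simpa [ovInt, Real.norm_eq_abs] using h

lemma ovInt_add (c c' : ContinuousMap Ω ℝ) (π : ProbabilityMeasure Ω) :
    ovInt (c + c') π = ovInt c π + ovInt c' π := by
  unfold ovInt
  rw [← integral_add (ovInt_integrable c π) (ovInt_integrable c' π)]
  simp

lemma ovInt_sub (c c' : ContinuousMap Ω ℝ) (π : ProbabilityMeasure Ω) :
    ovInt (c - c') π = ovInt c π - ovInt c' π := by
  unfold ovInt
  rw [← integral_sub (ovInt_integrable c π) (ovInt_integrable c' π)]
  simp

lemma ovInt_smul (t : ℝ) (c : ContinuousMap Ω ℝ) (π : ProbabilityMeasure Ω) :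
    ovInt (t • c) π = t * ovInt c π := by
  unfold ovInt
  simp only [ContinuousMap.smul_apply, smul_eq_mul]
  rw [integral_const_mul]

lemma ovInt_le_add_dist (c c' : ContinuousMap Ω ℝ) (π : ProbabilityMeasure Ω) :
    ovInt c π ≤ ovInt c' π + dist c c' := by
  have h2 := abs_ovInt_le (c - c') π
  rw [ovInt_sub] at h2
  have h1 := le_abs_self (ovInt c π - ovInt c' π)
  have h3 : dist c c' = ‖c - c'‖ := dist_eq_norm c c'
  linarith

/-- The optimal value: infimum of the linear functional over the set of plans. -/
noncomputable def ovVal (P : Set (ProbabilityMeasure Ω)) (c : ContinuousMap Ω ℝ) : ℝ :=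
  sInf ((fun π => ovInt c π) '' P)

lemma ovVal_bddBelow (P : Set (ProbabilityMeasure Ω)) (c : ContinuousMap Ω ℝ) :
    BddBelow ((fun π => ovInt c π) '' P) := by
  refine ⟨-‖c‖, ?_⟩
  rintro x ⟨π, -, rfl⟩
  have := (abs_le.mp (abs_ovInt_le c π)).1
  linarith

lemma ovVal_le {P : Set (ProbabilityMeasure Ω)} {π : ProbabilityMeasure Ω} (hπ : π ∈ P)
    (c : ContinuousMap Ω ℝ) : ovVal P c ≤ ovInt c π :=
  csInf_le (ovVal_bddBelow P c) ⟨π, hπ, rfl⟩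

lemma le_ovVal {P : Set (ProbabilityMeasure Ω)} (hP : P.Nonempty) {a : ℝ}
    {c : ContinuousMap Ω ℝ} (h : ∀ π ∈ P, a ≤ ovInt c π) : a ≤ ovVal P c :=
  le_csInf (hP.image _) (by rintro x ⟨π, hπ, rfl⟩; exact h π hπ)

lemma ovVal_le_add_dist {P : Set (ProbabilityMeasure Ω)} (hP : P.Nonempty)
    (c c' : ContinuousMap Ω ℝ) : ovVal P c ≤ ovVal P c' + dist c c' := by
  have h : ovVal P c - dist c c' ≤ ovVal P c' := by
    refine le_ovVal hP fun π hπ => ?_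
    have h1 : ovVal P c ≤ ovInt c π := ovVal_le hπ c
    have h2 := ovInt_le_add_dist c c' π
    linarith
  linarith

lemma ovVal_dist_le {P : Set (ProbabilityMeasure Ω)} (hP : P.Nonempty)
    (c c' : ContinuousMap Ω ℝ) : dist (ovVal P c) (ovVal P c') ≤ dist c c' := by
  rw [Real.dist_eq, abs_le]
  have h1 := ovVal_le_add_dist hP c c'
  have h2 := ovVal_le_add_dist hP c' c
  rw [dist_comm c' c] at h2
  constructor <;> linarith

lemma ovVal_lipschitz {P : Set (ProbabilityMeasure Ω)} (hP : P.Nonempty) :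
    LipschitzWith 1 (ovVal P) :=
  LipschitzWith.of_dist_le_mul fun c c' => by
    simpa using ovVal_dist_le hP c c'

lemma ovVal_continuous {P : Set (ProbabilityMeasure Ω)} (hP : P.Nonempty) :
    Continuous (ovVal P) := (ovVal_lipschitz hP).continuous

end OTAux

/-- Generic uniqueness of optimal plans for fixed marginals (Levin): for compact metric spaces
with Borel probability measures `μ`, `ν`, there is a residual set of costs
`c ∈ C⁰(M × N; ℝ)` for which the optimal transport plan between `μ` and `ν` is unique. -/
theorem stmt16 {M N : Type*}
    [MetricSpace M] [CompactSpace M] [MeasurableSpace M] [BorelSpace M]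
    [MetricSpace N] [CompactSpace N] [MeasurableSpace N] [BorelSpace N]
    (μ : Measure M) (ν : Measure N) [IsProbabilityMeasure μ] [IsProbabilityMeasure ν] :
    let Plan : Set (ProbabilityMeasure (M × N)) :=
      {π | π.toMeasure.map Prod.fst = μ ∧ π.toMeasure.map Prod.snd = ν}
    let Opt : ContinuousMap (M × N) ℝ → ProbabilityMeasure (M × N) → Prop := fun c π =>
      π ∈ Plan ∧ ∀ π' ∈ Plan, ∫ p, c p ∂π.toMeasure ≤ ∫ p, c p ∂π'.toMeasure
    ∃ C ∈ residual (ContinuousMap (M × N) ℝ), ∀ c ∈ C,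
      ∀ π₁ π₂ : ProbabilityMeasure (M × N), Opt c π₁ → Opt c π₂ → π₁ = π₂ := by
  intro Plan Opt
  -- the set of plans is nonempty (product measure)
  have hPne : Plan.Nonempty := by
    refine ⟨⟨μ.prod ν, inferInstance⟩, ?_, ?_⟩
    · show (μ.prod ν).map Prod.fst = μ
      simp
    · show (μ.prod ν).map Prod.snd = ν
      simp
  -- a dense sequence of test functions
  obtain ⟨f, hf⟩ := TopologicalSpace.exists_dense_seq (ContinuousMap (M × N) ℝ)
  -- error terms
  set e : ℕ → ℝ := fun l => 1 / (l + 1) with he_def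
  have he_pos : ∀ l : ℕ, 0 < e l := fun l => by positivity
  -- the open sets
  set U : ℕ → ℕ → Set (ContinuousMap (M × N) ℝ) := fun n l =>
    {c | ∃ D t₀ : ℝ, 0 < t₀ ∧
      ovVal Plan c + (t₀ * D - t₀ * e l) < ovVal Plan (c + t₀ • f n) ∧
      ovVal Plan c + (-(t₀ * D) - t₀ * e l) < ovVal Plan (c + (-t₀) • f n)} with hU_def
  -- optimality gives the value
  have hval : ∀ (c : ContinuousMap (M × N) ℝ) (π : ProbabilityMeasure (M × N)),
      Opt c π → ovInt c π = ovVal Plan c := by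
    intro c π hπ
    obtain ⟨hmem, hopt⟩ := hπ
    refine le_antisymm ?_ (ovVal_le hmem c)
    exact le_ovVal hPne fun π' hπ' => hopt π' hπ'
  -- openness
  have hopen : ∀ n l, IsOpen (U n l) := by
    intro n l
    have hrw : U n l = ⋃ (D : ℝ) (t₀ : ℝ) (_ : 0 < t₀),
        ({c | ovVal Plan c + (t₀ * D - t₀ * e l) < ovVal Plan (c + t₀ • f n)} ∩
         {c | ovVal Plan c + (-(t₀ * D) - t₀ * e l) < ovVal Plan (c + (-t₀) • f n)}) := by
      ext c
      simp only [hU_def, Set.mem_setOf_eq, Set.mem_iUnion, Set.mem_inter_iff]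
      tauto
    rw [hrw]
    refine isOpen_iUnion fun D => isOpen_iUnion fun t₀ => isOpen_iUnion fun ht₀ => ?_
    have hc0 : Continuous (ovVal Plan) := ovVal_continuous hPne
    refine IsOpen.inter ?_ ?_
    · exact isOpen_lt (hc0.add continuous_const)
        (hc0.comp (continuous_id.add continuous_const))
    · exact isOpen_lt (hc0.add continuous_const)
        (hc0.comp (continuous_id.add continuous_const))
  -- density
  have hdense : ∀ n l, Dense (U n l) := by
    intro n l
    rw [Metric.dense_iff]
    intro c₀ r hr
    -- the one-dimensional value function in direction f n
    set ψ : ℝ → ℝ := fun t => ovVal Plan (c₀ + t • f n) with hψ_def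
    have hψ_lip : LipschitzWith ‖f n‖₊ ψ := by
      refine LipschitzWith.of_dist_le_mul fun t s => ?_
      have h1 : dist (c₀ + t • f n) (c₀ + s • f n) = ‖f n‖ * dist t s := by
        rw [dist_eq_norm]
        have : (c₀ + t • f n) - (c₀ + s • f n) = (t - s) • f n := by
          module
        have hns : ‖(t - s) • f n‖ = |t - s| * ‖f n‖ := by
          simpa [Real.norm_eq_abs] using norm_smul (t - s) (f n)
        rw [this, hns, Real.dist_eq, mul_comm]
      calc dist (ψ t) (ψ s) ≤ dist (c₀ + t • f n) (c₀ + s • f n) :=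
            ovVal_dist_le hPne _ _
        _ = ‖f n‖ * dist t s := h1
        _ = (‖f n‖₊ : ℝ) * dist t s := by rw [coe_nnnorm]
    have hdiff : ∀ᵐ t, DifferentiableAt ℝ ψ t := hψ_lip.ae_differentiableAt
    -- find a point of differentiability close to 0
    set δ : ℝ := r / (‖f n‖ + 1) with hδ_def
    have hδ_pos : 0 < δ := by
      apply div_pos hr
      positivity
    have hts : ∃ ts ∈ Set.Ioo (0 : ℝ) δ, DifferentiableAt ℝ ψ ts := by
      by_contra hcon
      push_neg at hcon
      have hsub : Set.Ioo (0 : ℝ) δ ⊆ {t | ¬ DifferentiableAt ℝ ψ t} := fun t ht => hcon t ht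
      have h0 : volume {t | ¬ DifferentiableAt ℝ ψ t} = 0 := by
        simpa [ae_iff] using hdiff
      have h1 : volume (Set.Ioo (0 : ℝ) δ) = 0 :=
        le_antisymm (h0 ▸ measure_mono hsub) zero_le
      rw [Real.volume_Ioo] at h1
      simp only [ENNReal.ofReal_eq_zero, sub_zero] at h1
      linarith
    obtain ⟨ts, hts_mem, hts_diff⟩ := hts
    set D : ℝ := deriv ψ ts with hD_def
    have hderiv : HasDerivAt ψ D ts := hts_diff.hasDerivAt
    have hslope := hasDerivAt_iff_tendsto_slope.mp hderiv
    have hev : ∀ᶠ u in nhdsWithin ts {ts}ᶜ, dist (slope ψ ts u) D < e l :=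
      (Metric.tendsto_nhds.mp hslope) (e l) (he_pos l)
    rw [eventually_nhdsWithin_iff] at hev
    rw [Metric.eventually_nhds_iff] at hev
    obtain ⟨ρ, hρ_pos, hρ⟩ := hev
    set t₀ : ℝ := ρ / 2 with ht₀_def
    have ht₀_pos : 0 < t₀ := by positivity
    -- estimates at ts + t₀ and ts - t₀
    have hplus : |(ψ (ts + t₀) - ψ ts) / t₀ - D| < e l := by
      have h1 : dist (ts + t₀) ts < ρ := by
        rw [Real.dist_eq]
        rw [ht₀_def]
        rw [abs_of_pos (by linarith)]
        linarith
      have h2 : (ts + t₀) ∈ ({ts}ᶜ : Set ℝ) := by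
        simp only [Set.mem_compl_iff, Set.mem_singleton_iff]
        intro h
        have : t₀ = 0 := by linarith
        linarith
      have := hρ h1 h2
      rw [Real.dist_eq, slope_def_field] at this
      simpa using this
    have hminus : |(ψ (ts - t₀) - ψ ts) / (-t₀) - D| < e l := by
      have h1 : dist (ts - t₀) ts < ρ := by
        rw [Real.dist_eq]
        rw [ht₀_def]
        rw [abs_of_neg (by linarith)]
        linarith
      have h2 : (ts - t₀) ∈ ({ts}ᶜ : Set ℝ) := by
        simp only [Set.mem_compl_iff, Set.mem_singleton_iff]
        intro h
        have : t₀ = 0 := by linarith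
        linarith
      have := hρ h1 h2
      rw [Real.dist_eq, slope_def_field] at this
      have harg : ts - t₀ - ts = -t₀ := by ring
      rw [harg] at this
      exact this
    -- the perturbed cost
    set c' : ContinuousMap (M × N) ℝ := c₀ + ts • f n with hc'_def
    have hshift : ∀ s : ℝ, c' + s • f n = c₀ + (ts + s) • f n := by
      intro s
      rw [hc'_def]
      module
    refine ⟨c', ?_, ?_⟩
    · -- in the ball
      rw [Metric.mem_ball, dist_eq_norm]
      have h1 : c' - c₀ = ts • f n := by rw [hc'_def]; module
      have hns : ‖ts • f n‖ = |ts| * ‖f n‖ := by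
        simpa [Real.norm_eq_abs] using norm_smul ts (f n)
      rw [h1, hns, abs_of_pos hts_mem.1]
      calc ts * ‖f n‖ ≤ ts * (‖f n‖ + 1) := by
            apply mul_le_mul_of_nonneg_left (by linarith) hts_mem.1.le
        _ < δ * (‖f n‖ + 1) := by
            apply mul_lt_mul_of_pos_right hts_mem.2 (by positivity)
        _ = r := by
            rw [hδ_def]
            field_simp
    · -- in U n l
      refine ⟨D, t₀, ht₀_pos, ?_, ?_⟩
      · have h1 : ovVal Plan (c' + t₀ • f n) = ψ (ts + t₀) := by rw [hshift]
        have h2 : ovVal Plan c' = ψ ts := by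
          rw [hψ_def]
        rw [h1, h2]
        have := (abs_lt.mp hplus).1
        have h3 : (ψ (ts + t₀) - ψ ts) / t₀ > D - e l := by linarith
        have h4 : ψ (ts + t₀) - ψ ts > t₀ * (D - e l) := by
          rwa [gt_iff_lt, lt_div_iff₀ ht₀_pos, mul_comm] at h3
        nlinarith
      · have h1 : ovVal Plan (c' + (-t₀) • f n) = ψ (ts - t₀) := by
          rw [hshift]
          have : ts + -t₀ = ts - t₀ := by ring
          rw [this]
        have h2 : ovVal Plan c' = ψ ts := by rw [hψ_def]
        rw [h1, h2]
        have := (abs_lt.mp hminus).2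
        have h3 : (ψ (ts - t₀) - ψ ts) / (-t₀) < D + e l := by linarith
        have h4 : ψ (ts - t₀) - ψ ts > (-t₀) * (D + e l) := by
          rw [div_lt_iff_of_neg (by linarith : (-t₀ : ℝ) < 0)] at h3
          linarith [h3]
        nlinarith
  -- the residual set
  refine ⟨⋂ (n : ℕ) (l : ℕ), U n l, ?_, ?_⟩
  · exact countable_iInter_mem.mpr fun n =>
      countable_iInter_mem.mpr fun l => residual_of_dense_open (hopen n l) (hdense n l)
  · intro c hc π₁ π₂ h₁ h₂
    -- the integrals of each f n agree
    have key : ∀ n : ℕ, ovInt (f n) π₁ = ovInt (f n) π₂ := by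
      intro n
      set a₁ : ℝ := ovInt (f n) π₁ with ha₁
      set a₂ : ℝ := ovInt (f n) π₂ with ha₂
      have hbound : ∀ l : ℕ, |a₁ - a₂| < 2 * e l := by
        intro l
        have hcU : c ∈ U n l := by
          have := Set.mem_iInter.mp (Set.mem_iInter.mp hc n) l
          exact this
        obtain ⟨D, t₀, ht₀, hlt1, hlt2⟩ := hcU
        have hgen : ∀ (π : ProbabilityMeasure (M × N)), Opt c π →
            D - e l < ovInt (f n) π ∧ ovInt (f n) π < D + e l := by
          intro π hπ
          have hmem : π ∈ Plan := hπ.1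
          have hvq : ovInt c π = ovVal Plan c := hval c π hπ
          have hub1 : ovVal Plan (c + t₀ • f n) ≤ ovInt c π + t₀ * ovInt (f n) π := by
            have := ovVal_le hmem (c + t₀ • f n)
            rwa [ovInt_add, ovInt_smul] at this
          have hub2 : ovVal Plan (c + (-t₀) • f n) ≤ ovInt c π + (-t₀) * ovInt (f n) π := by
            have := ovVal_le hmem (c + (-t₀) • f n)
            rwa [ovInt_add, ovInt_smul] at this
          constructor
          · nlinarith [hlt1, hub1, hvq]
          · nlinarith [hlt2, hub2, hvq]
        obtain ⟨hl1, hr1⟩ := hgen π₁ h₁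
        obtain ⟨hl2, hr2⟩ := hgen π₂ h₂
        rw [abs_sub_lt_iff]
        constructor <;> nlinarith
      by_contra hne
      have habs : 0 < |a₁ - a₂| := abs_pos.mpr (sub_ne_zero.mpr hne)
      obtain ⟨l, hl⟩ := exists_nat_gt (2 / |a₁ - a₂|)
      have h2 : 2 * e l < |a₁ - a₂| := by
        rw [he_def]
        have hl1 : (2 : ℝ) / |a₁ - a₂| < l + 1 := by
          have : (l : ℝ) < l + 1 := by linarith
          linarith
        rw [div_lt_iff₀ habs] at hl1
        have hpos : (0 : ℝ) < (l : ℝ) + 1 := by positivity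
        rw [mul_one_div, div_lt_iff₀ hpos]
        linarith [hl1]
      linarith [hbound l]
    -- hence the integrals of all continuous functions agree
    have hall : ∀ g : ContinuousMap (M × N) ℝ, ovInt g π₁ = ovInt g π₂ := by
      have hc1 : Continuous fun g => ovInt g π₁ := by
        refine (LipschitzWith.of_dist_le_mul (K := 1) fun g g' => ?_).continuous
        rw [Real.dist_eq]
        have h1 := ovInt_le_add_dist g g' π₁
        have h2 := ovInt_le_add_dist g' g π₁
        rw [dist_comm g' g] at h2
        rw [abs_le]
        constructor <;> simp <;> linarith
      have hc2 : Continuous fun g => ovInt g π₂ := by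
        refine (LipschitzWith.of_dist_le_mul (K := 1) fun g g' => ?_).continuous
        rw [Real.dist_eq]
        have h1 := ovInt_le_add_dist g g' π₂
        have h2 := ovInt_le_add_dist g' g π₂
        rw [dist_comm g' g] at h2
        rw [abs_le]
        constructor <;> simp <;> linarith
      have heq : (fun g => ovInt g π₁) = fun g => ovInt g π₂ := by
        apply Continuous.ext_on hf hc1 hc2
        rintro g ⟨n, rfl⟩
        exact key n
      exact fun g => congrFun heq g
    -- conclude equality of the measures
    apply ProbabilityMeasure.toMeasure_injective
    apply ext_of_forall_lintegral_eq_of_IsFiniteMeasure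
    intro g
    set G : ContinuousMap (M × N) ℝ := ⟨fun x => (g x : ℝ),
      NNReal.continuous_coe.comp g.continuous⟩ with hG_def
    have h1 : ∫⁻ x, g x ∂π₁.toMeasure = ENNReal.ofReal (∫ x, (g x : ℝ) ∂π₁.toMeasure) :=
      lintegral_coe_eq_integral _ (ovInt_integrable G π₁)
    have h2 : ∫⁻ x, g x ∂π₂.toMeasure = ENNReal.ofReal (∫ x, (g x : ℝ) ∂π₂.toMeasure) :=
      lintegral_coe_eq_integral _ (ovInt_integrable G π₂)
    rw [h1, h2]
    congr 1
    exact hall G
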